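/- The hitting-time function H(d) of the simple random walk on the hypercube is increasing and concave: for all 1 ≤ d ≤ N-1, H(d) - H(d-1) ≥ H(d+1) - H(d) > 0. -/

import Mathlib

/-- Expected hitting time of the simple random walk on the `N`-hypercube to a
fixed target vertex, starting from Hamming distance `d` (closed form). -/
noncomputable def hittingTimeH (N d : ℕ) : ℝ :=
  ∑ d' ∈ Finset.range d,
    (1 + ∑ j ∈ Finset.Icc 1 (N - 1 - d'), (N.choose (d' + j) : ℝ)) /
      ((N - 1).choose d' : ℝ)

/-- Sum of binomial coefficients `C(N,k)` for `k` from `d+1` to `N`. -/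
private def Ssum (N d : ℕ) : ℕ := ∑ k ∈ Finset.Icc (d+1) N, N.choose k

private lemma key_choose (N a b : ℕ) (hab : a + 1 ≤ b) (hbN : b + 1 ≤ N) :
    N.choose (b+1) * (N-1).choose a ≤ N.choose b * (N-1).choose (a+1) := by
  have h1 := Nat.choose_succ_right_eq N b
  have h2 := Nat.choose_succ_right_eq (N-1) a
  have h3 : (N - b) * (a + 1) ≤ (N - 1 - a) * (b + 1) :=
    Nat.mul_le_mul (by omega) (by omega)
  apply Nat.le_of_mul_le_mul_right _ (show 0 < (b+1)*(a+1) by positivity)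
  calc N.choose (b+1) * (N-1).choose a * ((b+1)*(a+1))
      = (N.choose (b+1) * (b+1)) * ((N-1).choose a * (a+1)) := by ring
    _ = (N.choose b * (N - b)) * ((N-1).choose a * (a+1)) := by rw [h1]
    _ = N.choose b * (N-1).choose a * ((N - b) * (a+1)) := by ring
    _ ≤ N.choose b * (N-1).choose a * ((N - 1 - a) * (b+1)) :=
        Nat.mul_le_mul_left _ h3
    _ = N.choose b * ((N-1).choose (a+1) * (a+1)) * (b+1) := by rw [h2]; ring
    _ = N.choose b * (N-1).choose (a+1) * ((b+1)*(a+1)) := by ring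

private lemma Ssum_mono (N d : ℕ) (h : d + 2 ≤ N) :
    Ssum N (d+1) * (N-1).choose d ≤ Ssum N d * (N-1).choose (d+1) := by
  unfold Ssum
  rw [Finset.sum_mul, Finset.sum_mul]
  have hIcc : Finset.Icc (d+1+1) N
      = Finset.map (addRightEmbedding 1) (Finset.Icc (d+1) (N-1)) := by
    rw [Finset.map_add_right_Icc]
    congr 1
    omega
  rw [hIcc, Finset.sum_map]
  calc ∑ k ∈ Finset.Icc (d+1) (N-1), N.choose (addRightEmbedding 1 k) * (N-1).choose d
      ≤ ∑ k ∈ Finset.Icc (d+1) (N-1), N.choose k * (N-1).choose (d+1) := by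
        apply Finset.sum_le_sum
        intro k hk
        simp only [Finset.mem_Icc] at hk
        exact key_choose N d k hk.1 (by omega)
    _ ≤ ∑ k ∈ Finset.Icc (d+1) N, N.choose k * (N-1).choose (d+1) :=
        Finset.sum_le_sum_of_subset (Finset.Icc_subset_Icc_right (by omega))

private lemma numer_eq (N d : ℕ) (h : d + 1 ≤ N) :
    Ssum N d = (∑ j ∈ Finset.Icc 1 (N - 1 - d), N.choose (d + j)) + 1 := by
  unfold Ssum
  have hIcc : Finset.Icc (d+1) N
      = Finset.map (addLeftEmbedding d) (Finset.Icc 1 (N-d)) := by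
    rw [Finset.map_add_left_Icc]
    congr 1
    omega
  rw [hIcc, Finset.sum_map]
  have hNd : N - d = (N - 1 - d) + 1 := by omega
  rw [hNd, Finset.sum_Icc_succ_top (by omega)]
  simp only [addLeftEmbedding_apply]
  have hlast : N.choose (d + (N - 1 - d + 1)) = 1 := by
    have : d + (N - 1 - d + 1) = N := by omega
    rw [this, Nat.choose_self]
  rw [hlast]

private lemma diff_eq (N d : ℕ) (h : d + 1 ≤ N) :
    hittingTimeH N (d+1) - hittingTimeH N d
      = ((Ssum N d : ℝ)) / ((N-1).choose d : ℝ) := by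
  unfold hittingTimeH
  rw [Finset.sum_range_succ]
  have : (1 : ℝ) + ∑ j ∈ Finset.Icc 1 (N - 1 - d), (N.choose (d + j) : ℝ)
      = (Ssum N d : ℝ) := by
    rw [numer_eq N d h]
    push_cast
    ring
  rw [this]
  ring

/-- The hitting-time function is increasing and concave:
for `1 ≤ d ≤ N-1`, `H(d) - H(d-1) ≥ H(d+1) - H(d) > 0`. -/
theorem stmt_6 (N : ℕ) (d : ℕ) (hd : 1 ≤ d) (hdN : d ≤ N - 1) :
    hittingTimeH N d - hittingTimeH N (d - 1) ≥
      hittingTimeH N (d + 1) - hittingTimeH N d ∧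
    0 < hittingTimeH N (d + 1) - hittingTimeH N d := by
  obtain ⟨m, rfl⟩ : ∃ m, d = m + 1 := ⟨d - 1, by omega⟩
  have hm2 : m + 2 ≤ N := by omega
  simp only [Nat.add_sub_cancel]
  rw [diff_eq N m (by omega), diff_eq N (m+1) (by omega)]
  have hc0 : (0:ℝ) < ((N-1).choose m : ℝ) := by
    exact_mod_cast Nat.choose_pos (by omega : m ≤ N - 1)
  have hc1 : (0:ℝ) < ((N-1).choose (m+1) : ℝ) := by
    exact_mod_cast Nat.choose_pos (by omega : m + 1 ≤ N - 1)
  constructor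
  · rw [ge_iff_le, div_le_div_iff₀ hc1 hc0]
    exact_mod_cast Ssum_mono N m hm2
  · apply div_pos _ hc1
    have : 0 < Ssum N (m+1) := by
      rw [numer_eq N (m+1) (by omega)]
      omega
    exact_mod_cast this
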